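/- Let F ⊆ K be finite fields with |F| = q and [K : F] = n, and let α₀, α₁, …, α_{n−1} ∈ K. Then the family (α₀, …, α_{n−1}) is a basis of K as an F-vector space if and only if the n × n matrix A over K with entries A_{ij} = α_j^{q^i} (0 ≤ i, j < n) has nonzero determinant. -/

import Mathlib

open Matrix Polynomial

section aux

variable (F K : Type*) [Field F] [Fintype F] [Field K] [Fintype K] [Algebra F K]

omit [Fintype K] in
/-- Key fact: raising to the `q^i` power commutes with `F`-scalar multiplication. -/
lemma aux_smul_pow (a : F) (x : K) (i : ℕ) :
    (a • x) ^ Fintype.card F ^ i = a • x ^ Fintype.card F ^ i := by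
  rw [Algebra.smul_def, Algebra.smul_def, mul_pow, ← map_pow, FiniteField.pow_card_pow]

/-- The power maps `x ↦ x ^ q ^ i`, `i < n`, are pairwise distinct monoid homs. -/
lemma aux_pow_injective (n : ℕ) (hn : Module.finrank F K = n) :
    Function.Injective (fun i : Fin n => powMonoidHom (Fintype.card F ^ (i : ℕ)) : Fin n → K →* K) := by
  classical
  set q := Fintype.card F with hq
  have hq1 : 1 < q := Fintype.one_lt_card
  have hcardK : Fintype.card K = q ^ n := by
    rw [← hn]; exact Module.card_eq_pow_finrank (K := F) (V := K)
  have key : ∀ i j : Fin n, (i : ℕ) < (j : ℕ) →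
      (powMonoidHom (q ^ (i : ℕ)) : K →* K) ≠ powMonoidHom (q ^ (j : ℕ)) := by
    intro i j hlt hij
    have hx : ∀ x : K, x ^ q ^ (j : ℕ) = x ^ q ^ (i : ℕ) := fun x =>
      (DFunLike.congr_fun hij x).symm
    set P : K[X] := X ^ q ^ (j : ℕ) - X ^ q ^ (i : ℕ) with hP
    have hqlt : q ^ (i : ℕ) < q ^ (j : ℕ) := Nat.pow_lt_pow_right hq1 hlt
    have hP0 : P ≠ 0 := by
      intro h
      have := congrArg (fun p => Polynomial.coeff p (q ^ (j : ℕ))) h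
      simp [hP, Polynomial.coeff_X_pow, hqlt.ne'] at this
    have hroots : (Finset.univ : Finset K) ⊆ P.roots.toFinset := by
      intro x _
      rw [Multiset.mem_toFinset, Polynomial.mem_roots hP0]
      simp [hP, Polynomial.IsRoot, hx x, sub_self]
    have h1 : Fintype.card K ≤ P.roots.toFinset.card :=
      (Finset.card_univ (α := K)) ▸ Finset.card_le_card hroots
    have h2 : P.roots.toFinset.card ≤ P.natDegree :=
      (Multiset.toFinset_card_le _).trans (P.card_roots')
    have h3 : P.natDegree ≤ q ^ (j : ℕ) := by
      calc P.natDegree ≤ max (X ^ q ^ (j : ℕ) : K[X]).natDegree (X ^ q ^ (i : ℕ) : K[X]).natDegree :=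
            Polynomial.natDegree_sub_le _ _
        _ ≤ q ^ (j : ℕ) := by simp [Polynomial.natDegree_X_pow, hqlt.le]
    have h4 : q ^ (j : ℕ) < q ^ n := Nat.pow_lt_pow_right hq1 j.isLt
    omega
  intro i j hij
  by_contra hne
  rcases Nat.lt_or_ge (i : ℕ) (j : ℕ) with h | h
  · exact key i j h hij
  · have h' : (j : ℕ) < (i : ℕ) :=
      lt_of_le_of_ne h (fun hh => hne (Fin.ext hh.symm))
    exact key j i h' hij.symm

end aux

/-- A family of `n = [K : F]` elements of a finite field extension `K / F` with `|F| = q`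
is an `F`-basis of `K` iff the matrix with `(i,j)` entry `α j ^ q ^ i` has nonzero
determinant. -/
theorem stmt0 (F K : Type*) [Field F] [Fintype F] [Field K] [Fintype K] [Algebra F K]
    (n : ℕ) (hn : Module.finrank F K = n) (α : Fin n → K) :
    (LinearIndependent F α ∧ Submodule.span F (Set.range α) = ⊤) ↔
      (Matrix.of fun i j : Fin n => α j ^ Fintype.card F ^ (i : ℕ)).det ≠ 0 := by
  classical
  set q := Fintype.card F with hq
  set M : Matrix (Fin n) (Fin n) K := Matrix.of fun i j : Fin n => α j ^ q ^ (i : ℕ) with hM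
  haveI : FiniteDimensional F K := inferInstance
  constructor
  · rintro ⟨-, hspan⟩ hdet
    -- det = 0 gives a nontrivial K-relation among the rows
    have hTdet : Mᵀ.det = 0 := by rw [Matrix.det_transpose]; exact hdet
    obtain ⟨c, hc0, hc⟩ := (Matrix.exists_mulVec_eq_zero_iff).mpr hTdet
    have hroot : ∀ j : Fin n, ∑ i : Fin n, c i * α j ^ q ^ (i : ℕ) = 0 := by
      intro j
      have := congrFun hc j
      simpa [Matrix.mulVec, dotProduct, hM, mul_comm] using this
    -- the relation holds on all of K, by F-linearity of x ↦ x ^ q ^ i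
    have hall : ∀ x : K, ∑ i : Fin n, c i * x ^ q ^ (i : ℕ) = 0 := by
      have key : ∀ x ∈ Submodule.span F (Set.range α),
          ∑ i : Fin n, c i * x ^ q ^ (i : ℕ) = 0 := by
        intro x hx
        induction hx using Submodule.span_induction with
        | mem x hxmem =>
          obtain ⟨j, rfl⟩ := hxmem
          exact hroot j
        | zero => simp [hq, zero_pow (pow_ne_zero _ (Fintype.card_pos (α := F)).ne')]
        | add x y hx hy ihx ihy =>
          have hxy : ∀ i : Fin n, (x + y) ^ q ^ (i : ℕ) = x ^ q ^ (i : ℕ) + y ^ q ^ (i : ℕ) := by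
            intro i
            obtain ⟨p, hp⟩ := CharP.exists F
            obtain ⟨f, hpprime, hcard⟩ := FiniteField.card F p
            haveI : Fact p.Prime := ⟨hpprime⟩
            haveI : CharP K p := charP_of_injective_algebraMap (algebraMap F K).injective p
            have : q ^ (i : ℕ) = p ^ ((f : ℕ) * (i : ℕ)) := by
              rw [hq, hcard, ← pow_mul]
            rw [this, add_pow_char_pow]
          simp only [hxy, mul_add, Finset.sum_add_distrib, ihx, ihy, add_zero]
        | smul a x hx ihx =>
          calc ∑ i : Fin n, c i * (a • x) ^ q ^ (i : ℕ)
              = ∑ i : Fin n, c i * (a • x ^ q ^ (i : ℕ)) := by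
                simp only [hq, aux_smul_pow]
            _ = a • ∑ i : Fin n, c i * x ^ q ^ (i : ℕ) := by
                simp only [Algebra.smul_def, Finset.mul_sum]
                congr 1; ext i; ring
            _ = 0 := by rw [ihx, smul_zero]
      intro x
      exact key x (hspan ▸ Submodule.mem_top)
    -- contradiction with linear independence of the power maps
    have hLI : LinearIndependent K (fun i : Fin n => ((powMonoidHom (q ^ (i : ℕ)) : K →* K) : K → K)) :=
      (linearIndependent_monoidHom K K).comp _ (aux_pow_injective F K n hn)
    have := Fintype.linearIndependent_iff.mp hLI c (by
      funext x
      simpa [powMonoidHom_apply, mul_comm] using hall x)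
    exact hc0 (funext this)
  · intro hdet
    have hli : LinearIndependent F α := by
      by_contra hnli
      obtain ⟨c, hsum, i0, hi0⟩ := Fintype.not_linearIndependent_iff.mp hnli
      apply hdet
      rw [← Matrix.exists_mulVec_eq_zero_iff]
      refine ⟨fun j => algebraMap F K (c j), ?_, ?_⟩
      · intro h
        exact hi0 ((algebraMap F K).injective (by simpa using congrFun h i0))
      · funext i
        have : ∀ j : Fin n, α j ^ q ^ (i : ℕ) * algebraMap F K (c j)
            = (c j • α j) ^ q ^ (i : ℕ) := by
          intro j
          rw [aux_smul_pow, Algebra.smul_def]; ring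
        have hfrob : (∑ j : Fin n, c j • α j) ^ q ^ (i : ℕ)
            = ∑ j : Fin n, (c j • α j) ^ q ^ (i : ℕ) := by
          obtain ⟨p, hp⟩ := CharP.exists F
          obtain ⟨f, hpprime, hcard⟩ := FiniteField.card F p
          haveI : Fact p.Prime := ⟨hpprime⟩
          haveI : CharP K p := charP_of_injective_algebraMap (algebraMap F K).injective p
          have hqe : q ^ (i : ℕ) = p ^ ((f : ℕ) * (i : ℕ)) := by
            rw [hq, hcard, ← pow_mul]
          rw [hqe]
          exact map_sum (iterateFrobenius K p ((f : ℕ) * (i : ℕ))) _ _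
        simp only [Matrix.mulVec, dotProduct, hM, Matrix.of_apply, Pi.zero_apply]
        rw [Finset.sum_congr rfl fun j _ => this j, ← hfrob, hsum]
        exact zero_pow (pow_ne_zero _ (Fintype.card_pos (α := F)).ne')
    exact ⟨hli, hli.span_eq_top_of_card_eq_finrank' (by simp [hn])⟩
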